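/- For 16-QAM (n = 2): the decision region of the constellation point s²_{(0,2)} = τ(2c_0 + c_2) = τ(1+j) satisfies R(s²_{(0,2)}) = g⁻¹( (B̃_0 + 4·g(0)) ∩ (B̃_2 + 2·g(τ c_0)) ), i.e., the decision region equals the intersection of the base region B̃_0 with the base region B̃_2 shifted by 2·g(τ c_0) = (2τ, 2τ)^T (up to the boundary of the regions). -/

import Mathlib

noncomputable def cpt (i : Fin 4) : ℂ :=
  (Real.sqrt 2 : ℂ) * ((Real.cos (Real.pi / 4 * (1 + 2 * (i : ℕ))) : ℂ) +
    Complex.I * (Real.sin (Real.pi / 4 * (1 + 2 * (i : ℕ))) : ℂ))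

noncomputable def m1 (i : Fin 4) : Fin 2 → ℝ :=
  ![Real.sqrt 2 * Real.cos (Real.pi / 4 * (1 + 2 * (i : ℕ))), 0]

noncomputable def m2 (i : Fin 4) : Fin 2 → ℝ :=
  ![0, Real.sqrt 2 * Real.sin (Real.pi / 4 * (1 + 2 * (i : ℕ)))]

noncomputable def gvec (z : ℂ) : Fin 2 → ℝ := ![z.re, z.im]

lemma sq2 : Real.sqrt 2 * (Real.sqrt 2 / 2) = 1 := by
  rw [div_eq_mul_inv, ← mul_assoc, Real.mul_self_sqrt (by norm_num)]; norm_num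

lemma cpt0 : cpt 0 = 1 + Complex.I := by
  rw [cpt, show Real.pi / 4 * (1 + 2 * ((0 : Fin 4) : ℕ)) = Real.pi / 4 by
      norm_num [show ((0 : Fin 4) : ℕ) = 0 from rfl],
    Real.cos_pi_div_four, Real.sin_pi_div_four]
  apply Complex.ext <;> simp <;> linarith [sq2]

lemma cpt1 : cpt 1 = -1 + Complex.I := by
  rw [cpt, show Real.pi / 4 * (1 + 2 * ((1 : Fin 4) : ℕ)) = Real.pi - Real.pi / 4 by
      norm_num [show ((1 : Fin 4) : ℕ) = 1 from rfl]; ring,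
    Real.cos_pi_sub, Real.sin_pi_sub, Real.cos_pi_div_four, Real.sin_pi_div_four]
  apply Complex.ext <;> simp <;> linarith [sq2]

lemma cpt2 : cpt 2 = -1 - Complex.I := by
  rw [cpt, show Real.pi / 4 * (1 + 2 * ((2 : Fin 4) : ℕ)) = Real.pi / 4 + Real.pi by
      norm_num [show ((2 : Fin 4) : ℕ) = 2 from rfl]; ring,
    Real.cos_add_pi, Real.sin_add_pi, Real.cos_pi_div_four, Real.sin_pi_div_four]
  apply Complex.ext <;> simp <;> linarith [sq2]

lemma cpt3 : cpt 3 = 1 - Complex.I := by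
  rw [cpt, show Real.pi / 4 * (1 + 2 * ((3 : Fin 4) : ℕ)) = 2 * Real.pi - Real.pi / 4 by
      norm_num [show ((3 : Fin 4) : ℕ) = 3 from rfl]; ring,
    Real.cos_two_pi_sub, Real.sin_two_pi_sub, Real.cos_pi_div_four, Real.sin_pi_div_four]
  apply Complex.ext <;> simp <;> linarith [sq2]

lemma m1_0 : m1 0 = ![1, 0] := by
  rw [m1, show Real.pi / 4 * (1 + 2 * ((0 : Fin 4) : ℕ)) = Real.pi / 4 by
      norm_num [show ((0 : Fin 4) : ℕ) = 0 from rfl],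
    Real.cos_pi_div_four]
  funext i; fin_cases i <;> simp <;> linarith [sq2]

lemma m2_0 : m2 0 = ![0, 1] := by
  rw [m2, show Real.pi / 4 * (1 + 2 * ((0 : Fin 4) : ℕ)) = Real.pi / 4 by
      norm_num [show ((0 : Fin 4) : ℕ) = 0 from rfl],
    Real.sin_pi_div_four]
  funext i; fin_cases i <;> simp <;> linarith [sq2]

lemma m1_2 : m1 2 = ![-1, 0] := by
  rw [m1, show Real.pi / 4 * (1 + 2 * ((2 : Fin 4) : ℕ)) = Real.pi / 4 + Real.pi by
      norm_num [show ((2 : Fin 4) : ℕ) = 2 from rfl]; ring,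
    Real.cos_add_pi, Real.cos_pi_div_four]
  funext i; fin_cases i <;> simp <;> linarith [sq2]

lemma m2_2 : m2 2 = ![0, -1] := by
  rw [m2, show Real.pi / 4 * (1 + 2 * ((2 : Fin 4) : ℕ)) = Real.pi / 4 + Real.pi by
      norm_num [show ((2 : Fin 4) : ℕ) = 2 from rfl]; ring,
    Real.sin_add_pi, Real.sin_pi_div_four]
  funext i; fin_cases i <;> simp <;> linarith [sq2]

lemma fin4_mk0 : (⟨0, by omega⟩ : Fin 4) = 0 := rfl
lemma fin4_mk1 : (⟨1, by omega⟩ : Fin 4) = 1 := rfl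
lemma fin4_mk2 : (⟨2, by omega⟩ : Fin 4) = 2 := rfl
lemma fin4_mk3 : (⟨3, by omega⟩ : Fin 4) = 3 := rfl

lemma abs_le_abs_iff_normSq (z w : ℂ) :
    ‖z‖ ≤ ‖w‖ ↔ Complex.normSq z ≤ Complex.normSq w := by
  constructor
  · intro h
    have := mul_self_le_mul_self (norm_nonneg z) h
    rwa [← sq, ← sq, Complex.sq_norm, Complex.sq_norm] at this
  · intro h
    rw [Complex.norm_def, Complex.norm_def]
    exact Real.sqrt_le_sqrt h

set_option maxHeartbeats 2000000 in
theorem stmt15 (τ : ℝ) (hτ : 0 < τ) :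
    interior {y : ℂ | ∀ i₁ i₂ : Fin 4, (i₁, i₂) ≠ ((0 : Fin 4), (2 : Fin 4)) →
        ‖y - (τ : ℂ) * (2 * cpt 0 + cpt 2)‖ ≤
          ‖y - (τ : ℂ) * (2 * cpt i₁ + cpt i₂)‖} =
    {y : ℂ |
      (∃ a b : ℝ, 0 < a ∧ 0 < b ∧
        gvec y = a • m1 0 + b • m2 0 + (4 : ℝ) • gvec 0) ∧
      (∃ a b : ℝ, 0 < a ∧ 0 < b ∧
        gvec y = a • m1 2 + b • m2 2 + (2 : ℝ) • gvec ((τ : ℂ) * cpt 0))} := by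
  have key : {y : ℂ | ∀ i₁ i₂ : Fin 4, (i₁, i₂) ≠ ((0 : Fin 4), (2 : Fin 4)) →
        ‖y - (τ : ℂ) * (2 * cpt 0 + cpt 2)‖ ≤
          ‖y - (τ : ℂ) * (2 * cpt i₁ + cpt i₂)‖} =
      Complex.re ⁻¹' (Set.Icc 0 (2*τ)) ∩ Complex.im ⁻¹' (Set.Icc 0 (2*τ)) := by
    ext y
    simp only [Set.mem_setOf_eq, Set.mem_inter_iff, Set.mem_preimage, Set.mem_Icc]
    constructor
    · intro h
      have h1 := h 0 3 (by decide)
      have h2 := h 1 3 (by decide)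
      have h3 := h 0 1 (by decide)
      have h4 := h 3 1 (by decide)
      rw [abs_le_abs_iff_normSq] at h1 h2 h3 h4
      simp only [cpt0, cpt1, cpt2, cpt3, Complex.normSq_apply, Complex.sub_re, Complex.sub_im,
        Complex.mul_re, Complex.mul_im, Complex.add_re, Complex.add_im, Complex.neg_re,
        Complex.neg_im, Complex.one_re, Complex.one_im, Complex.I_re, Complex.I_im,
        Complex.ofReal_re, Complex.ofReal_im, Complex.re_ofNat, Complex.im_ofNat] at h1 h2 h3 h4
      norm_num at h1 h2 h3 h4
      refine ⟨⟨?_, ?_⟩, ?_, ?_⟩ <;> nlinarith [h1, h2, h3, h4, hτ]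
    · rintro ⟨⟨hre0, hre2⟩, him0, him2⟩ i₁ i₂ hne
      rw [abs_le_abs_iff_normSq]
      fin_cases i₁ <;> fin_cases i₂ <;>
        simp only [fin4_mk0, fin4_mk1, fin4_mk2, fin4_mk3] <;>
        first
        | (exact absurd rfl hne)
        | (simp only [cpt0, cpt1, cpt2, cpt3, Complex.normSq_apply, Complex.sub_re,
            Complex.sub_im, Complex.mul_re, Complex.mul_im, Complex.add_re, Complex.add_im,
            Complex.neg_re, Complex.neg_im, Complex.one_re, Complex.one_im, Complex.I_re,
            Complex.I_im, Complex.ofReal_re, Complex.ofReal_im, Complex.re_ofNat,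
            Complex.im_ofNat]
           ring_nf
           nlinarith [hre0, hre2, him0, him2, hτ, mul_pos hτ hτ,
             mul_nonneg hre0 hτ.le, mul_nonneg him0 hτ.le])
  rw [key, interior_inter, Complex.interior_preimage_re, Complex.interior_preimage_im,
    interior_Icc]
  ext y
  simp only [Set.mem_inter_iff, Set.mem_preimage, Set.mem_Ioo, Set.mem_setOf_eq]
  rw [m1_0, m2_0, m1_2, m2_2, cpt0]
  constructor
  · rintro ⟨⟨hre0, hre2⟩, him0, him2⟩
    refine ⟨⟨y.re, y.im, hre0, him0, ?_⟩, ⟨2*τ - y.re, 2*τ - y.im, by linarith, by linarith, ?_⟩⟩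
    · funext i
      fin_cases i <;> simp [gvec]
    · funext i
      fin_cases i <;> simp [gvec, Complex.mul_re, Complex.mul_im] <;> ring
  · rintro ⟨⟨a, b, ha, hb, hab⟩, ⟨c, d, hc, hd, hcd⟩⟩
    have e1 := congrFun hab 0
    have e2 := congrFun hab 1
    have e3 := congrFun hcd 0
    have e4 := congrFun hcd 1
    simp [gvec, Complex.mul_re, Complex.mul_im] at e1 e2 e3 e4
    exact ⟨⟨by linarith, by linarith⟩, by linarith, by linarith⟩
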